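/- For real t > 0, the infinite series identity 2t·∑_{k=1}^∞ 1/(t² + 4k²π²) = 1/(e^t − 1) − 1/t + 1/2 holds. -/

import Mathlib

set_option linter.unnecessarySeqFocus false
set_option linter.unusedTactic false

open Real Set intervalIntegral
open scoped Interval

noncomputable section

local instance : Fact ((0:ℝ) < 1) := ⟨one_pos⟩

/-- The function on the circle. -/
def myg (t : ℝ) : ℝ → ℂ := fun x => Complex.cosh (t * (x - 1/2))

lemma myg_per (t : ℝ) : myg t 0 = myg t 1 := by
  unfold myg
  have : (t:ℂ) * ((0:ℝ) - 1/2) = -((t:ℂ) * ((1:ℝ) - 1/2)) := by push_cast; ring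
  rw [this, Complex.cosh_neg]

def myF (t : ℝ) : C(AddCircle (1:ℝ), ℂ) :=
  ⟨AddCircle.liftIco 1 0 (myg t),
   AddCircle.liftIco_zero_continuous (myg_per t)
     (Continuous.continuousOn (by unfold myg; fun_prop))⟩

lemma myF_coe (t : ℝ) {x : ℝ} (hx : x ∈ Icc (0:ℝ) 1) : myF t ↑x = myg t x := by
  show AddCircle.liftIco 1 0 (myg t) ↑x = myg t x
  rcases eq_or_lt_of_le hx.2 with h | h
  · subst h
    have h10 : ((1:ℝ) : AddCircle (1:ℝ)) = ((0:ℝ) : AddCircle (1:ℝ)) := by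
      simp [AddCircle]
    rw [h10, AddCircle.liftIco_zero_coe_apply ⟨le_refl _, one_pos⟩, myg_per]
  · exact AddCircle.liftIco_zero_coe_apply ⟨hx.1, h⟩

lemma myF_zero (t : ℝ) : myF t 0 = Real.cosh (t/2) := by
  have := myF_coe t (x := 0) (by norm_num)
  rw [show ((0:ℝ) : AddCircle (1:ℝ)) = (0 : AddCircle (1:ℝ)) by norm_cast] at this
  rw [this]
  unfold myg
  rw [show (t:ℂ) * ((0:ℝ) - 1/2) = -(t/2 : ℝ) by push_cast; ring, Complex.cosh_neg,
    ← Complex.ofReal_cosh]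

lemma myCoeff (t : ℝ) (ht : 0 < t) (n : ℤ) :
    fourierCoeff (myF t) n = ((2 * t * Real.sinh (t/2) / (t^2 + 4*π^2*(n:ℝ)^2) : ℝ) : ℂ) := by
  have ht0 : (t:ℂ) ≠ 0 := by exact_mod_cast ht.ne'
  set c₁ : ℂ := t - 2*π*n*Complex.I with hc₁
  set c₂ : ℂ := -t - 2*π*n*Complex.I with hc₂
  have hc₁0 : c₁ ≠ 0 := by
    intro h
    have := congrArg Complex.re h
    simp [hc₁] at this <;> linarith

  have hc₂0 : c₂ ≠ 0 := by
    intro h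
    have := congrArg Complex.re h
    simp [hc₂] at this <;> linarith
  have hD : (0:ℝ) < t^2 + 4*π^2*(n:ℝ)^2 := by positivity
  have hDc : ((t:ℂ)^2 + 4*(π:ℂ)^2*(n:ℂ)^2) ≠ 0 := by
    intro h
    have : ((t^2 + 4*π^2*(n:ℝ)^2 : ℝ) : ℂ) = 0 := by push_cast; linear_combination h
    exact hD.ne' (by exact_mod_cast this)
  rw [fourierCoeff_eq_intervalIntegral (myF t) n 0]
  rw [show (0:ℝ) + 1 = 1 by norm_num]
  have hint : ∀ x ∈ Set.uIcc (0:ℝ) 1,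
      (fourier (-n) (x : AddCircle (1:ℝ)) : ℂ) • myF t x
        = (Complex.exp (-(t:ℂ)/2) * Complex.exp (c₁ * x)
            + Complex.exp ((t:ℂ)/2) * Complex.exp (c₂ * x)) / 2 := by
    intro x hx
    rw [Set.uIcc_of_le (by norm_num : (0:ℝ) ≤ 1)] at hx
    rw [myF_coe t hx]
    unfold myg
    rw [fourier_coe_apply, Complex.cosh, smul_eq_mul]
    rw [← Complex.exp_add, ← Complex.exp_add, mul_div_assoc', mul_add,
      ← Complex.exp_add, ← Complex.exp_add]
    congr 3 <;> push_cast <;> ring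
  rw [intervalIntegral.integral_congr hint]
  have hi1 : IntervalIntegrable (fun x : ℝ => Complex.exp (-(t:ℂ)/2) * Complex.exp (c₁ * x))
      MeasureTheory.volume 0 1 := (Continuous.intervalIntegrable (by fun_prop) _ _)
  have hi2 : IntervalIntegrable (fun x : ℝ => Complex.exp ((t:ℂ)/2) * Complex.exp (c₂ * x))
      MeasureTheory.volume 0 1 := (Continuous.intervalIntegrable (by fun_prop) _ _)
  rw [intervalIntegral.integral_div, intervalIntegral.integral_add hi1 hi2,
    intervalIntegral.integral_const_mul, intervalIntegral.integral_const_mul,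
    integral_exp_mul_complex hc₁0, integral_exp_mul_complex hc₂0]
  have he1 : Complex.exp (c₁ * 1) = Complex.exp t := by
    rw [mul_one, hc₁, sub_eq_add_neg, Complex.exp_add]
    rw [show -(2*(π:ℂ)*n*Complex.I) = (-n : ℤ) * (2*π*Complex.I) by push_cast; ring,
      Complex.exp_int_mul_two_pi_mul_I, mul_one]
  have he2 : Complex.exp (c₂ * 1) = Complex.exp (-t) := by
    rw [mul_one, hc₂, sub_eq_add_neg, Complex.exp_add]
    rw [show -(2*(π:ℂ)*n*Complex.I) = (-n : ℤ) * (2*π*Complex.I) by push_cast; ring,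
      Complex.exp_int_mul_two_pi_mul_I, mul_one]
  rw [Complex.ofReal_one, Complex.ofReal_zero, he1, he2, mul_zero, mul_zero, Complex.exp_zero]
  have key1 : Complex.exp (-(t:ℂ)/2) * (Complex.exp t - 1) = 2 * Complex.sinh (t/2) := by
    rw [Complex.sinh, mul_sub, ← Complex.exp_add, mul_one]
    ring_nf
  have key2 : Complex.exp ((t:ℂ)/2) * (Complex.exp (-t) - 1) = -(2 * Complex.sinh (t/2)) := by
    rw [Complex.sinh, mul_sub, ← Complex.exp_add, mul_one]
    ring_nf
  have hprod : c₁ * c₂ = -((t:ℂ)^2 + 4*(π:ℂ)^2*(n:ℂ)^2) := by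
    rw [hc₁, hc₂]
    linear_combination (4*(π:ℂ)^2*(n:ℂ)^2) * Complex.I_sq
  have : (Complex.exp (-(t:ℂ)/2) * ((Complex.exp t - 1) / c₁)
      + Complex.exp ((t:ℂ)/2) * ((Complex.exp (-t) - 1) / c₂)) / 2
      = Complex.sinh (t/2) * (2*t) / ((t:ℂ)^2 + 4*(π:ℂ)^2*(n:ℂ)^2) := by
    have hdiff : c₂ - c₁ = -(2*(t:ℂ)) := by rw [hc₁, hc₂]; ring
    have hden : c₁ * c₂ * 2 ≠ 0 := by
      exact mul_ne_zero (mul_ne_zero hc₁0 hc₂0) two_ne_zero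
    rw [mul_div_assoc', mul_div_assoc', key1, key2, div_add_div _ _ hc₁0 hc₂0, div_div]
    rw [div_eq_div_iff hden hDc]
    set S : ℂ := Complex.sinh ((t:ℂ)/2) with hS
    set D : ℂ := (t:ℂ)^2 + 4*(π:ℂ)^2*(n:ℂ)^2 with hDd
    linear_combination (2*S*D) * hdiff - (4*(t:ℂ)*S) * hprod
  rw [this]
  rw [one_div_one, one_smul]
  push_cast
  ring

theorem partial_fraction_series (t : ℝ) (ht : 0 < t) :
    2 * t * ∑' k : ℕ, 1 / (t ^ 2 + 4 * ((k : ℝ) + 1) ^ 2 * π ^ 2)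
      = 1 / (Real.exp t - 1) - 1 / t + 1 / 2 := by
  have hsh : 0 < Real.sinh (t/2) := Real.sinh_pos_iff.mpr (by positivity)
  set s : ℝ := 2 * t * Real.sinh (t/2) with hs
  have hs0 : 0 < s := by positivity
  set gZ : ℤ → ℝ := fun n => s / (t^2 + 4*π^2*(n:ℝ)^2) with hgZ
  -- summability of the ℕ-series
  have hsum : Summable (fun k : ℕ => 1 / (t ^ 2 + 4 * ((k : ℝ) + 1) ^ 2 * π ^ 2)) := by
    have hbase : Summable (fun k : ℕ => 1 / ((k:ℝ)+1)^2) := by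
      have h2 : Summable (fun n : ℕ => 1 / (n:ℝ) ^ 2) :=
        summable_one_div_nat_pow.mpr one_lt_two
      have := (summable_nat_add_iff (f := fun n : ℕ => 1 / (n:ℝ) ^ 2) 1).mpr h2
      refine this.congr fun k => ?_
      push_cast
      ring
    refine Summable.of_nonneg_of_le (fun k => by positivity) (fun k => ?_) hbase
    apply one_div_le_one_div_of_le (by positivity)
    nlinarith [sq_nonneg t, mul_pos (by positivity : (0:ℝ) < ((k:ℝ)+1)^2)
      (by nlinarith [Real.pi_gt_three] : (0:ℝ) < π^2 - 1)]
  set Ssum : ℝ := ∑' k : ℕ, 1 / (t ^ 2 + 4 * ((k : ℝ) + 1) ^ 2 * π ^ 2) with hSsum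
  have hfun : (fun k : ℕ => gZ ((k:ℤ)+1))
      = fun k : ℕ => s * (1 / (t ^ 2 + 4 * ((k : ℝ) + 1) ^ 2 * π ^ 2)) := by
    funext k
    rw [hgZ, mul_one_div]
    congr 1
    push_cast
    ring
  have h1 : HasSum (fun k : ℕ => gZ ((k:ℤ)+1)) (s * Ssum) := by
    rw [hfun]; exact hsum.hasSum.mul_left s
  have hneg : HasSum (fun k : ℕ => gZ (-((k:ℤ)+1))) (s * Ssum) := by
    refine h1.congr_fun fun k => ?_
    show s / _ = s / _
    congr 1
    push_cast
    ring
  have h0 : HasSum (fun k : ℕ => gZ (k:ℤ)) (s * Ssum + s / t^2) := by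
    have h1' : HasSum (fun k : ℕ => gZ ((k + 1 : ℕ) : ℤ)) (s * Ssum) := by
      refine h1.congr_fun fun k => ?_; push_cast; ring_nf
    have := (hasSum_nat_add_iff (f := fun k : ℕ => gZ (k:ℤ)) 1).mp h1'
    simpa [hgZ] using this
  have hZ : HasSum gZ ((s * Ssum + s / t^2) + s * Ssum) := by
    exact HasSum.of_nat_of_neg_add_one h0 hneg
  -- Fourier side
  have hcoeff : ∀ n : ℤ, fourierCoeff (myF t) n = ((gZ n : ℝ) : ℂ) := fun n => myCoeff t ht n
  have hFsummable : Summable (fun n : ℤ => fourierCoeff (myF t) n) := by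
    simp_rw [hcoeff]
    exact Complex.summable_ofReal.mpr hZ.summable
  have hpt := has_pointwise_sum_fourier_series_of_summable hFsummable (0 : AddCircle (1:ℝ))
  rw [myF_zero] at hpt
  have hpt' : HasSum (fun n : ℤ => ((gZ n : ℝ) : ℂ)) ((Real.cosh (t/2) : ℝ) : ℂ) := by
    refine hpt.congr_fun fun n => ?_
    rw [fourier_eval_zero, smul_eq_mul, mul_one, hcoeff]
  have hZ' : HasSum gZ (Real.cosh (t/2)) := Complex.hasSum_ofReal.mp hpt'
  have key : Real.cosh (t/2) = (s * Ssum + s / t^2) + s * Ssum := hZ'.unique hZ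
  -- final algebra
  have hSsum_eq : Ssum = (Real.cosh (t/2) - s/t^2)/(2*s) := by
    rw [eq_div_iff (by positivity : (2*s) ≠ 0)]
    linear_combination -key
  rw [hSsum_eq, hs, Real.cosh_eq, Real.sinh_eq, Real.exp_neg]
  set u : ℝ := Real.exp (t/2) with hu
  have hu1 : 1 < u := by
    rw [hu, ← Real.exp_zero]
    exact Real.exp_lt_exp.mpr (by positivity)
  have hu0 : 0 < u := lt_trans one_pos hu1
  have hu2 : Real.exp t = u * u := by
    rw [hu, ← Real.exp_add]
    norm_num
  rw [hu2]
  have h3 : u * u - 1 ≠ 0 := by nlinarith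
  have h4 : u - u⁻¹ ≠ 0 := by
    have : u⁻¹ < 1 := by rw [inv_lt_one_iff₀]; right; exact hu1
    nlinarith
  have h5 : u ^ 2 - 1 ≠ 0 := by nlinarith
  have h6 : -1 + u ^ 2 ≠ 0 := by nlinarith
  field_simp
  ring
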